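/- arXiv:1212.3462 — 2 statements merged into one kernel-verified Lean document; each statement's English description precedes it below -/
import Mathlib

section
/- In the Hopf algebra 𝒯_κ, an element A satisfies Δ(A) = A' ⊗ 1 + ℰ ⊗ A for some A' ∈ 𝒯_κ if and only if A is a linear combination of 1, ℰ, and P₁. -/
open TensorProduct

/-- Integer powers ℰ^m in terms of ℰ and its inverse ℰ⁻¹. -/
noncomputable def Epow {T : Type*} [CommRing T] (E Einv : T) : ℤ → T
  | Int.ofNat n => E ^ n
  | Int.negSucc n => Einv ^ (n + 1)

lemma Epow_ofNat {T : Type*} [CommRing T] (E Einv : T) (n : ℕ) :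
    Epow E Einv (n : ℤ) = E ^ n := rfl

lemma Epow_mul_E {T : Type*} [CommRing T] {E Einv : T} (hE : E * Einv = 1) (k : ℤ) :
    Epow E Einv k * E = Epow E Einv (k + 1) := by
  cases k with
  | ofNat n =>
      show E ^ n * E = Epow E Einv ((n : ℤ) + 1)
      rw [show ((n : ℤ) + 1) = ((n + 1 : ℕ) : ℤ) by push_cast; ring, Epow_ofNat, pow_succ]
  | negSucc n =>
      cases n with
      | zero =>
          show Einv ^ 1 * E = Epow E Einv 0
          rw [show Epow E Einv 0 = E ^ 0 from rfl]
          rw [pow_one, pow_zero, mul_comm, hE]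
      | succ m =>
          show Einv ^ (m + 2) * E = Einv ^ (m + 1)
          rw [pow_succ' Einv (m+1), mul_assoc, mul_comm Einv, mul_assoc, hE, mul_one]

lemma Epow_mul_pow {T : Type*} [CommRing T] {E Einv : T} (hE : E * Einv = 1) (k : ℤ) (s : ℕ) :
    Epow E Einv k * E ^ s = Epow E Einv (k + s) := by
  induction s with
  | zero => simp
  | succ m ih =>
      rw [pow_succ, ← mul_assoc, ih, Epow_mul_E hE]
      congr 1
      push_cast
      ring

section Main
variable {T : Type*} [CommRing T] [Algebra ℂ T]
    (P0 P1 E Einv : T) (hE : E * Einv = 1)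
    (b : Module.Basis (ℕ × ℕ × ℤ) ℂ T)
    (hb : ∀ i j : ℕ, ∀ k : ℤ, b (i, j, k) = P0 ^ i * P1 ^ j * Epow E Einv k)
    (Δ : T →ₐ[ℂ] T ⊗[ℂ] T)
    (hΔP0 : Δ P0 = P0 ⊗ₜ[ℂ] 1 + 1 ⊗ₜ[ℂ] P0)
    (hΔP1 : Δ P1 = P1 ⊗ₜ[ℂ] 1 + E ⊗ₜ[ℂ] P1)
    (hΔE : Δ E = E ⊗ₜ[ℂ] E)
    (hΔEinv : Δ Einv = Einv ⊗ₜ[ℂ] Einv)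

include hE hb hΔP0 hΔP1 hΔE hΔEinv in
lemma deltaB (i j : ℕ) (k : ℤ) :
    Δ (b (i, j, k)) =
      ∑ r ∈ Finset.range (i + 1), ∑ s ∈ Finset.range (j + 1),
        (i.choose r * j.choose s) •
          (b (r, s, k + ((j - s : ℕ) : ℤ)) ⊗ₜ[ℂ] b (i - r, j - s, k)) := by
  have hΔEp : ∀ k : ℤ, Δ (Epow E Einv k) = Epow E Einv k ⊗ₜ[ℂ] Epow E Einv k := by
    intro k
    cases k with
    | ofNat n =>
        show Δ (E ^ n) = (E ^ n) ⊗ₜ[ℂ] (E ^ n)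
        rw [map_pow, hΔE, Algebra.TensorProduct.tmul_pow]
    | negSucc n =>
        show Δ (Einv ^ (n+1)) = (Einv ^ (n+1)) ⊗ₜ[ℂ] (Einv ^ (n+1))
        rw [map_pow, hΔEinv, Algebra.TensorProduct.tmul_pow]
  rw [hb i j k, map_mul, map_mul, map_pow, map_pow, hΔP0, hΔP1, hΔEp, add_pow, add_pow,
    Finset.sum_mul_sum, Finset.sum_mul]
  refine Finset.sum_congr rfl fun r _ => ?_
  rw [Finset.sum_mul]
  refine Finset.sum_congr rfl fun s _ => ?_
  have e1 : (P0 ⊗ₜ[ℂ] (1:T)) ^ r = (P0 ^ r) ⊗ₜ[ℂ] (1:T) := by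
    rw [Algebra.TensorProduct.tmul_pow, one_pow]
  have e2 : ((1:T) ⊗ₜ[ℂ] P0) ^ (i - r) = (1:T) ⊗ₜ[ℂ] (P0 ^ (i - r)) := by
    rw [Algebra.TensorProduct.tmul_pow, one_pow]
  have e3 : (P1 ⊗ₜ[ℂ] (1:T)) ^ s = (P1 ^ s) ⊗ₜ[ℂ] (1:T) := by
    rw [Algebra.TensorProduct.tmul_pow, one_pow]
  have e4 : (E ⊗ₜ[ℂ] P1) ^ (j - s) = (E ^ (j - s)) ⊗ₜ[ℂ] (P1 ^ (j - s)) :=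
    Algebra.TensorProduct.tmul_pow _ _ _
  have e5 : ((P0 ^ r) ⊗ₜ[ℂ] (1:T)) * ((1:T) ⊗ₜ[ℂ] (P0 ^ (i - r))) *
      ((P1 ^ s) ⊗ₜ[ℂ] (1:T)) * ((E ^ (j - s)) ⊗ₜ[ℂ] (P1 ^ (j - s))) *
      (Epow E Einv k ⊗ₜ[ℂ] Epow E Einv k) =
      (P0 ^ r * P1 ^ s * (Epow E Einv k * E ^ (j - s))) ⊗ₜ[ℂ]
        (P0 ^ (i - r) * P1 ^ (j - s) * Epow E Einv k) := by
    rw [Algebra.TensorProduct.tmul_mul_tmul, Algebra.TensorProduct.tmul_mul_tmul,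
      Algebra.TensorProduct.tmul_mul_tmul, Algebra.TensorProduct.tmul_mul_tmul]
    congr 1 <;> ring
  rw [hb, hb, ← Epow_mul_pow hE k (j - s), e1, e2, e3, e4, nsmul_eq_mul, Nat.cast_mul, ← e5]
  ring
end Main

section Key
variable {T : Type*} [CommRing T] [Algebra ℂ T]
    (P0 P1 E Einv : T) (hE : E * Einv = 1)
    (b : Module.Basis (ℕ × ℕ × ℤ) ℂ T)
    (hb : ∀ i j : ℕ, ∀ k : ℤ, b (i, j, k) = P0 ^ i * P1 ^ j * Epow E Einv k)
    (Δ : T →ₐ[ℂ] T ⊗[ℂ] T)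
    (hΔP0 : Δ P0 = P0 ⊗ₜ[ℂ] 1 + 1 ⊗ₜ[ℂ] P0)
    (hΔP1 : Δ P1 = P1 ⊗ₜ[ℂ] 1 + E ⊗ₜ[ℂ] P1)
    (hΔE : Δ E = E ⊗ₜ[ℂ] E)
    (hΔEinv : Δ Einv = Einv ⊗ₜ[ℂ] Einv)

include hE hb hΔP0 hΔP1 hΔE hΔEinv in
lemma keyEq (A A' : T) (h : Δ A = A' ⊗ₜ[ℂ] 1 + E ⊗ₜ[ℂ] A)
    (i j : ℕ) (k : ℤ) (r s : ℕ) (hr : r ≤ i) (hs : s ≤ j)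
    (hne : ((i - r, j - s, k) : ℕ × ℕ × ℤ) ≠ (0, 0, 0)) :
    (b.repr A) (i, j, k) * (i.choose r) * (j.choose s) =
      if ((r, s, k + ((j - s : ℕ) : ℤ)) : ℕ × ℕ × ℤ) = (0, 0, 1) then
        (b.repr A) (i - r, j - s, k) else 0 := by
  classical
  have h1b : (1 : T) = b (0, 0, 0) := by
    rw [hb]
    show (1 : T) = P0 ^ 0 * P1 ^ 0 * E ^ 0
    simp
  have hEb : E = b (0, 0, 1) := by
    rw [hb]
    show E = P0 ^ 0 * P1 ^ 0 * E ^ 1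
    simp
  set B : Module.Basis ((ℕ × ℕ × ℤ) × (ℕ × ℕ × ℤ)) ℂ (T ⊗[ℂ] T) := Module.Basis.tensorProduct b b with hB
  set p : (ℕ × ℕ × ℤ) × (ℕ × ℕ × ℤ) :=
    ((r, s, k + ((j - s : ℕ) : ℤ)), (i - r, j - s, k)) with hp
  -- coefficient of Δ (b n) at p
  have hterm : ∀ n : ℕ × ℕ × ℤ, (B.repr (Δ (b n))) p =
      if n = (i, j, k) then ((i.choose r * j.choose s : ℕ) : ℂ) else 0 := by
    rintro ⟨i', j', k'⟩
    rw [deltaB P0 P1 E Einv hE b hb Δ hΔP0 hΔP1 hΔE hΔEinv i' j' k']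
    rw [map_sum]
    rw [Finsupp.finset_sum_apply]
    have hcoef : ∀ x y : ℕ × ℕ × ℤ, (B.repr (b x ⊗ₜ[ℂ] b y)) p =
        if (x, y) = p then 1 else 0 := by
      intro x y
      rw [← Module.Basis.tensorProduct_apply b b x y, ← hB, B.repr_self, Finsupp.single_apply]
    by_cases hn : ((i', j', k') : ℕ × ℕ × ℤ) = (i, j, k)
    · obtain ⟨h1, h2, h3⟩ : i' = i ∧ j' = j ∧ k' = k := by
        simpa [Prod.ext_iff] using hn
      subst h1; subst h2; subst h3
      rw [if_pos rfl]
      rw [Finset.sum_eq_single r]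
      · rw [map_sum, Finsupp.finset_sum_apply, Finset.sum_eq_single s]
        · rw [map_nsmul, Finsupp.smul_apply, hcoef, if_pos rfl]
          simp
        · intro s' hs' hss
          rw [map_nsmul, Finsupp.smul_apply, hcoef, if_neg, smul_zero]
          simp only [hp, Prod.ext_iff]
          rintro ⟨⟨_, h2, _⟩, _⟩
          exact hss h2
        · intro hcon
          exact absurd (Finset.mem_range.mpr (by omega)) hcon
      · intro r' hr' hrr
        rw [map_sum, Finsupp.finset_sum_apply, Finset.sum_eq_zero]
        intro s' hs'
        rw [map_nsmul, Finsupp.smul_apply, hcoef, if_neg, smul_zero]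
        simp only [hp, Prod.ext_iff]
        rintro ⟨⟨h1, _, _⟩, _⟩
        exact hrr h1
      · intro hcon
        exact absurd (Finset.mem_range.mpr (by omega)) hcon
    · rw [if_neg hn, Finset.sum_eq_zero]
      intro r' hr'
      rw [map_sum, Finsupp.finset_sum_apply, Finset.sum_eq_zero]
      intro s' hs'
      rw [map_nsmul, Finsupp.smul_apply, hcoef, if_neg, smul_zero]
      simp only [hp, Prod.ext_iff]
      simp only [Finset.mem_range] at hr' hs'
      rintro ⟨⟨hh1, hh2, hh3⟩, ⟨hh4, hh5, hh6⟩⟩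
      apply hn
      simp only [Prod.ext_iff]
      refine ⟨by omega, by omega, hh6⟩
  -- expand Δ A
  have hA : Δ A = (b.repr A).sum fun n c => c • Δ (b n) := by
    conv_lhs => rw [← b.linearCombination_repr A, Finsupp.linearCombination_apply]
    rw [map_finsuppSum]
    exact Finsupp.sum_congr fun n _ => map_smul Δ _ _
  have hL : (B.repr (Δ A)) p =
      (b.repr A) (i, j, k) * ((i.choose r * j.choose s : ℕ) : ℂ) := by
    rw [hA, map_finsuppSum, Finsupp.sum_apply]
    rw [Finsupp.sum]
    have : ∀ n ∈ (b.repr A).support,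
        (B.repr ((b.repr A) n • Δ (b n))) p =
        if n = (i, j, k) then (b.repr A) n * ((i.choose r * j.choose s : ℕ) : ℂ) else 0 := by
      intro n _
      rw [map_smul, Finsupp.smul_apply, hterm n, smul_eq_mul]
      by_cases hn : n = (i, j, k)
      · rw [if_pos hn, if_pos hn]
      · rw [if_neg hn, if_neg hn, mul_zero]
    rw [Finset.sum_congr rfl this, Finset.sum_ite_eq']
    by_cases hmem : ((i, j, k) : ℕ × ℕ × ℤ) ∈ (b.repr A).support
    · rw [if_pos hmem]
    · rw [if_neg hmem]
      rw [Finsupp.notMem_support_iff.mp hmem, zero_mul]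
  have hR : (B.repr (A' ⊗ₜ[ℂ] 1 + E ⊗ₜ[ℂ] A)) p =
      if ((r, s, k + ((j - s : ℕ) : ℤ)) : ℕ × ℕ × ℤ) = (0, 0, 1) then
        (b.repr A) (i - r, j - s, k) else 0 := by
    rw [map_add, Finsupp.add_apply]
    rw [show p = (p.1, p.2) from rfl]
    rw [Module.Basis.tensorProduct_repr_tmul_apply, Module.Basis.tensorProduct_repr_tmul_apply]
    rw [h1b, hEb, b.repr_self, b.repr_self]
    rw [Finsupp.single_apply, Finsupp.single_apply]
    rw [if_neg (by simpa [hp, eq_comm] using hne)]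
    simp only [hp, smul_eq_mul, zero_mul, zero_add]
    by_cases hcond : ((r, s, k + ((j - s : ℕ) : ℤ)) : ℕ × ℕ × ℤ) = (0, 0, 1)
    · rw [if_pos hcond.symm, if_pos hcond, mul_one]
    · rw [if_neg (fun hc => hcond hc.symm), if_neg hcond, mul_zero]
  have := hL.symm.trans ((congrArg (fun u => (B.repr u) p) h).trans hR)
  rw [Nat.cast_mul, ← mul_assoc] at this
  exact this
end Key

/-- In the Hopf algebra 𝒯_κ, an element A satisfies
Δ(A) = A' ⊗ 1 + ℰ ⊗ A for some A' if and only if A is a linear combination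
of 1, ℰ and P₁. -/
theorem stmt14 (T : Type*) [CommRing T] [Algebra ℂ T]
    (P0 P1 E Einv : T) (hE : E * Einv = 1)
    (b : Module.Basis (ℕ × ℕ × ℤ) ℂ T)
    (hb : ∀ i j : ℕ, ∀ k : ℤ, b (i, j, k) = P0 ^ i * P1 ^ j * Epow E Einv k)
    (Δ : T →ₐ[ℂ] T ⊗[ℂ] T)
    (hΔP0 : Δ P0 = P0 ⊗ₜ[ℂ] 1 + 1 ⊗ₜ[ℂ] P0)
    (hΔP1 : Δ P1 = P1 ⊗ₜ[ℂ] 1 + E ⊗ₜ[ℂ] P1)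
    (hΔE : Δ E = E ⊗ₜ[ℂ] E)
    (hΔEinv : Δ Einv = Einv ⊗ₜ[ℂ] Einv)
    (A : T) :
    (∃ A' : T, Δ A = A' ⊗ₜ[ℂ] 1 + E ⊗ₜ[ℂ] A) ↔
      ∃ c1 c2 c3 : ℂ, A = c1 • (1 : T) + c2 • E + c3 • P1 := by

  have h1b : (1 : T) = b (0, 0, 0) := by
    rw [hb]; show (1 : T) = P0 ^ 0 * P1 ^ 0 * E ^ 0; simp
  have hEb : E = b (0, 0, 1) := by
    rw [hb]; show E = P0 ^ 0 * P1 ^ 0 * E ^ 1; simp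
  have hP1b : P1 = b (0, 1, 0) := by
    rw [hb]; show P1 = P0 ^ 0 * P1 ^ 1 * E ^ 0; simp
  constructor
  · rintro ⟨A', h⟩
    have key := keyEq P0 P1 E Einv hE b hb Δ hΔP0 hΔP1 hΔE hΔEinv A A' h
    have vanish : ∀ i j : ℕ, ∀ k : ℤ, ((i, j, k) : ℕ × ℕ × ℤ) ≠ (0, 0, 0) →
        ((i, j, k) : ℕ × ℕ × ℤ) ≠ (0, 0, 1) → ((i, j, k) : ℕ × ℕ × ℤ) ≠ (0, 1, 0) →
        (b.repr A) (i, j, k) = 0 := by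
      intro i j k h0 h1 h2
      by_cases hk : k = 0
      · subst hk
        rcases Nat.eq_zero_or_pos i with hi | hi
        · subst hi
          have hj : 2 ≤ j := by
            rcases j with _ | _ | j
            · exact absurd rfl h0
            · exact absurd rfl h2
            · omega
          obtain ⟨j', rfl⟩ : ∃ j', j = j' + 1 := ⟨j - 1, by omega⟩
          have hkey := key 0 (j' + 1) 0 0 j' (le_refl 0) (by omega)
            (by simp [Prod.ext_iff])
          rw [if_neg (by simp [Prod.ext_iff]; omega)] at hkey
          rcases (by simpa [Nat.choose_succ_self_right, mul_eq_zero] using hkey :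
              (b.repr A) (0, j' + 1, 0) = 0 ∨ ((j' : ℂ) + 1 = 0)) with hg | hbad
          · exact hg
          · exact absurd hbad (Nat.cast_add_one_ne_zero j')
        · obtain ⟨i', rfl⟩ : ∃ i', i = i' + 1 := ⟨i - 1, by omega⟩
          have hkey := key (i' + 1) j 0 i' j (by omega) (le_refl j)
            (by simp [Prod.ext_iff])
          rw [if_neg (by simp [Prod.ext_iff])] at hkey
          rcases (by simpa [Nat.choose_succ_self_right, mul_eq_zero] using hkey :
              (b.repr A) (i' + 1, j, 0) = 0 ∨ ((i' : ℂ) + 1 = 0)) with hg | hbad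
          · exact hg
          · exact absurd hbad (Nat.cast_add_one_ne_zero i')
      · have hkey := key i j k i j (le_refl i) (le_refl j)
          (by simp [Prod.ext_iff]; omega)
        rw [if_neg (by simp only [Nat.sub_self, Nat.cast_zero, add_zero]; exact h1)] at hkey
        simpa using hkey
    refine ⟨(b.repr A) (0, 0, 0), (b.repr A) (0, 0, 1), (b.repr A) (0, 1, 0), ?_⟩
    apply b.repr.injective
    ext n
    obtain ⟨i, j, k⟩ := n
    rw [map_add, map_add, map_smul, map_smul, map_smul]
    conv_rhs => rw [h1b, hEb, hP1b]
    rw [b.repr_self, b.repr_self, b.repr_self]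
    simp only [Finsupp.add_apply, Finsupp.smul_apply, Finsupp.single_apply, smul_eq_mul]
    by_cases e1 : ((i, j, k) : ℕ × ℕ × ℤ) = (0, 0, 0)
    · obtain ⟨rfl, rfl, rfl⟩ : i = 0 ∧ j = 0 ∧ k = 0 := by simpa [Prod.ext_iff] using e1
      norm_num
    · by_cases e2 : ((i, j, k) : ℕ × ℕ × ℤ) = (0, 0, 1)
      · obtain ⟨rfl, rfl, rfl⟩ : i = 0 ∧ j = 0 ∧ k = 1 := by simpa [Prod.ext_iff] using e2
        norm_num [Prod.ext_iff]
      · by_cases e3 : ((i, j, k) : ℕ × ℕ × ℤ) = (0, 1, 0)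
        · obtain ⟨rfl, rfl, rfl⟩ : i = 0 ∧ j = 1 ∧ k = 0 := by simpa [Prod.ext_iff] using e3
          norm_num [Prod.ext_iff]
        · rw [if_neg (fun hc => e1 hc.symm), if_neg (fun hc => e2 hc.symm),
            if_neg (fun hc => e3 hc.symm), vanish i j k e1 e2 e3]
          ring
  · rintro ⟨c1, c2, c3, rfl⟩
    refine ⟨c1 • 1 + c3 • P1 - c1 • E, ?_⟩
    rw [map_add, map_add, map_smul, map_smul, map_smul, map_one, hΔE, hΔP1]
    rw [Algebra.TensorProduct.one_def]
    simp only [smul_add, add_tmul, sub_tmul, tmul_add, tmul_smul, smul_tmul']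
    module
end

section
/- For μ > 0, the function c(s) = (2π)⁻² ∫_{ℝ²} e^{-λξ₀}(λ⁻²(1-e^{-λξ₀})² + ξ₁² + μ²)^{-s/2} d²ξ is finite for s > 2, and lim_{s→2⁺} (s-2)·c(s) = 1/(4π), independently of μ and λ. -/
open MeasureTheory

open Set Real


lemma my_lintegral_cov {s : Set ℝ} {f f' : ℝ → ℝ}
    (hs : MeasurableSet s) (hf' : ∀ x ∈ s, HasDerivWithinAt f (f' x) s x)
    (hf : Set.InjOn f s) (g : ℝ → ENNReal) :
    ∫⁻ x in f '' s, g x = ∫⁻ x in s, ENNReal.ofReal |f' x| * g (f x) := by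
  simpa only [ContinuousLinearMap.det_toSpanSingleton] using
    lintegral_image_eq_lintegral_abs_det_fderiv_mul volume hs
      (fun x hx => (hf' x hx).hasFDerivWithinAt) hf g

lemma my_lintegral_polar (g : ℝ × ℝ → ENNReal) :
    (∫⁻ p in polarCoord.target, ENNReal.ofReal p.1 * g (polarCoord.symm p)) = ∫⁻ p, g p := by
  set B : ℝ × ℝ → ℝ × ℝ →L[ℝ] ℝ × ℝ := fun p =>
    LinearMap.toContinuousLinearMap (Matrix.toLin (Module.Basis.finTwoProd ℝ) (Module.Basis.finTwoProd ℝ)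
      !![Real.cos p.2, -p.1 * Real.sin p.2; Real.sin p.2, p.1 * Real.cos p.2])
  have A : ∀ p ∈ polarCoord.symm.source, HasFDerivAt polarCoord.symm (B p) p := fun p _ =>
    hasFDerivAt_polarCoord_symm p
  have B_det : ∀ p, (B p).det = p.1 := by
    intro p
    conv_rhs => rw [← one_mul p.1, ← Real.cos_sq_add_sin_sq p.2]
    simp only [B, neg_mul, LinearMap.det_toContinuousLinearMap, LinearMap.det_toLin,
      Matrix.det_fin_two_of, sub_neg_eq_add]
    ring
  symm
  calc
    ∫⁻ p, g p = ∫⁻ p in polarCoord.source, g p := by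
      rw [← setLIntegral_univ]
      exact (setLIntegral_congr polarCoord_source_ae_eq_univ.symm)
    _ = ∫⁻ p in polarCoord.symm '' polarCoord.target, g p := by
      rw [polarCoord.symm_image_target_eq_source]
    _ = ∫⁻ p in polarCoord.target, ENNReal.ofReal |(B p).det| * g (polarCoord.symm p) := by
      apply lintegral_image_eq_lintegral_abs_det_fderiv_mul volume
        polarCoord.open_target.measurableSet
        (fun p hp => (A p hp).hasFDerivWithinAt) polarCoord.symm.injOn g
    _ = ∫⁻ p in polarCoord.target, ENNReal.ofReal p.1 * g (polarCoord.symm p) := by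
      apply setLIntegral_congr_fun polarCoord.open_target.measurableSet
      intro x hx
      dsimp only
      rw [B_det, abs_of_pos hx.1]


lemma my_radial {mu s : ℝ} (hmu : 0 < mu) (hs : 2 < s) :
    IntegrableOn (fun r : ℝ => r * (r ^ 2 + mu ^ 2) ^ (-s / 2 : ℝ)) (Set.Ioi 0) ∧
      ∫ r in Set.Ioi (0 : ℝ), r * (r ^ 2 + mu ^ 2) ^ (-s / 2 : ℝ)
        = mu ^ (2 - s : ℝ) / (s - 2) := by
  have hpos : ∀ r : ℝ, (0:ℝ) < r ^ 2 + mu ^ 2 := fun r => by positivity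
  set H : ℝ → ℝ := fun r => (r ^ 2 + mu ^ 2) ^ ((2 - s) / 2 : ℝ) / (2 - s) with hH
  have hder : ∀ r : ℝ, HasDerivAt H (r * (r ^ 2 + mu ^ 2) ^ (-s / 2 : ℝ)) r := by
    intro r
    have h1 : HasDerivAt (fun r : ℝ => r ^ 2 + mu ^ 2) (2 * r) r := by
      simpa using ((hasDerivAt_pow 2 r).add_const (mu ^ 2))
    have h2 := (h1.rpow_const (p := ((2 - s) / 2 : ℝ)) (Or.inl (hpos r).ne')).div_const (2 - s)
    refine h2.congr_deriv (Eq.symm ?_)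
    have he : ((2 - s) / 2 - 1 : ℝ) = -s / 2 := by ring
    have h2s : (2 - s : ℝ) ≠ 0 := by linarith
    rw [he, eq_div_iff h2s]
    ring
  have htend : Filter.Tendsto H Filter.atTop (nhds 0) := by
    have h1 : Filter.Tendsto (fun r : ℝ => r ^ 2 + mu ^ 2) Filter.atTop Filter.atTop :=
      Filter.tendsto_atTop_add_const_right _ _ (Filter.tendsto_pow_atTop two_ne_zero)
    have h2 : Filter.Tendsto (fun x : ℝ => x ^ ((2 - s) / 2 : ℝ)) Filter.atTop (nhds 0) := by
      have he : ((2 - s) / 2 : ℝ) = -((s - 2) / 2) := by ring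
      rw [he]
      exact tendsto_rpow_neg_atTop (by linarith)
    have := (h2.comp h1).div_const (2 - s)
    simpa [hH, Function.comp] using this
  have hnonneg : ∀ r ∈ Set.Ioi (0:ℝ), 0 ≤ r * (r ^ 2 + mu ^ 2) ^ (-s / 2 : ℝ) := by
    intro r hr
    have hr0 : (0:ℝ) ≤ r := le_of_lt hr
    positivity
  have hcont : ContinuousWithinAt H (Set.Ici 0) 0 := (hder 0).continuousAt.continuousWithinAt
  have hderiv : ∀ x ∈ Set.Ioi (0:ℝ), HasDerivAt H (x * (x ^ 2 + mu ^ 2) ^ (-s / 2 : ℝ)) x :=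
    fun x _ => hder x
  refine ⟨integrableOn_Ioi_deriv_of_nonneg hcont hderiv hnonneg htend, ?_⟩
  rw [integral_Ioi_of_hasDerivAt_of_tendsto hcont hderiv
    (integrableOn_Ioi_deriv_of_nonneg hcont hderiv hnonneg htend) htend]
  have h0 : H 0 = mu ^ (2 - s : ℝ) / (2 - s) := by
    have e1 : ((0:ℝ) ^ 2 + mu ^ 2) = mu ^ (2:ℝ) := by
      rw [Real.rpow_two]; ring
    rw [hH]
    simp only
    rw [e1, ← Real.rpow_mul hmu.le, show (2:ℝ) * ((2 - s) / 2) = 2 - s by ring]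
  rw [h0, zero_sub, ← div_neg, neg_sub]


lemma my_lorentz {mu : ℝ} (hmu : 0 < mu) :
    Integrable (fun v : ℝ => (v ^ 2 + mu ^ 2)⁻¹) ∧
      ∫ v : ℝ, (v ^ 2 + mu ^ 2)⁻¹ = π / mu := by
  have hmne : mu ≠ 0 := hmu.ne'
  have key : (fun v : ℝ => (v ^ 2 + mu ^ 2)⁻¹)
      = fun v : ℝ => mu⁻¹ ^ 2 * (1 + (mu⁻¹ * v) ^ 2)⁻¹ := by
    funext v
    rw [mul_pow]
    rw [show (mu⁻¹ ^ 2 : ℝ) = (mu ^ 2)⁻¹ by rw [inv_pow]]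
    rw [← mul_inv]
    congr 1
    field_simp
    ring
  constructor
  · rw [key]
    exact (integrable_inv_one_add_sq.comp_mul_left' (inv_ne_zero hmne)).const_mul _
  · rw [key]
    rw [integral_const_mul, Measure.integral_comp_mul_left (fun x => (1 + x ^ 2)⁻¹) mu⁻¹,
      integral_univ_inv_one_add_sq]
    rw [inv_inv, abs_of_pos hmu]
    rw [smul_eq_mul]
    field_simp

-- the substitution map and its properties
lemma my_phi_hasDerivAt {lam : ℝ} (hlam : 0 < lam) (t : ℝ) :
    HasDerivAt (fun t : ℝ => lam⁻¹ * (1 - Real.exp (-lam * t))) (Real.exp (-lam * t)) t := by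
  have h1 : HasDerivAt (fun t : ℝ => -lam * t) (-lam) t := by
    simpa using (hasDerivAt_id t).const_mul (-lam)
  have h2 := h1.exp
  have h3 := ((hasDerivAt_const t (1 : ℝ)).sub h2).const_mul lam⁻¹
  refine h3.congr_deriv ?_
  field_simp
  ring

lemma my_phi_image {lam : ℝ} (hlam : 0 < lam) :
    (fun t : ℝ => lam⁻¹ * (1 - Real.exp (-lam * t))) '' Set.univ = Set.Iio lam⁻¹ := by
  ext u
  simp only [Set.image_univ, Set.mem_range, Set.mem_Iio]
  constructor
  · rintro ⟨t, rfl⟩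
    have he : 0 < Real.exp (-lam * t) := Real.exp_pos _
    have : (1 : ℝ) - Real.exp (-lam * t) < 1 := by linarith
    calc lam⁻¹ * (1 - Real.exp (-lam * t)) < lam⁻¹ * 1 :=
          mul_lt_mul_of_pos_left this (inv_pos.2 hlam)
      _ = lam⁻¹ := mul_one _
  · intro hu
    have hpos : 0 < 1 - lam * u := by
      have : lam * u < 1 := by
        calc lam * u < lam * lam⁻¹ := mul_lt_mul_of_pos_left hu hlam
          _ = 1 := mul_inv_cancel₀ hlam.ne'
      linarith
    refine ⟨-lam⁻¹ * Real.log (1 - lam * u), ?_⟩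
    have harg : -lam * (-lam⁻¹ * Real.log (1 - lam * u)) = Real.log (1 - lam * u) := by
      field_simp
    rw [harg, Real.exp_log hpos]
    field_simp
    ring

lemma my_phi_injOn {lam : ℝ} (hlam : 0 < lam) :
    Set.InjOn (fun t : ℝ => lam⁻¹ * (1 - Real.exp (-lam * t))) Set.univ := by
  have hmono : StrictMono (fun t : ℝ => lam⁻¹ * (1 - Real.exp (-lam * t))) := by
    intro a b hab
    have : Real.exp (-lam * b) < Real.exp (-lam * a) := by
      apply Real.exp_lt_exp.2
      nlinarith
    have h1 : (1 : ℝ) - Real.exp (-lam * a) < 1 - Real.exp (-lam * b) := by linarith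
    exact mul_lt_mul_of_pos_left h1 (inv_pos.2 hlam)
  exact hmono.injective.injOn

lemma my_main {lam mu s : ℝ} (hlam : 0 < lam) (hmu : 0 < mu) (hs : 2 < s) :
    ∃ R : ENNReal,
      (∫⁻ ξ : ℝ × ℝ, ENNReal.ofReal (Real.exp (-lam * ξ.1) *
          (lam⁻¹ ^ 2 * (1 - Real.exp (-lam * ξ.1)) ^ 2 + ξ.2 ^ 2 + mu ^ 2) ^ (-s / 2 : ℝ)))
        = ENNReal.ofReal (Real.pi * (mu ^ (2 - s : ℝ) / (s - 2))) + R ∧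
      R ≤ ENNReal.ofReal (lam⁻¹ * (mu ^ (2 - s : ℝ) * (Real.pi / mu))) := by
  set G : ℝ → ENNReal :=
    fun u => ∫⁻ v : ℝ, ENNReal.ofReal ((u ^ 2 + v ^ 2 + mu ^ 2) ^ (-s / 2 : ℝ)) with hG
  have hFc : Continuous fun p : ℝ × ℝ => (p.1 ^ 2 + p.2 ^ 2 + mu ^ 2) ^ (-s / 2 : ℝ) := by
    apply Continuous.rpow_const (by continuity)
    intro p; left; positivity
  have hrc : Continuous fun r : ℝ => (r ^ 2 + mu ^ 2) ^ (-s / 2 : ℝ) := by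
    apply Continuous.rpow_const (by continuity)
    intro r; left; positivity
  have hIc : Continuous fun ξ : ℝ × ℝ => Real.exp (-lam * ξ.1) *
      (lam⁻¹ ^ 2 * (1 - Real.exp (-lam * ξ.1)) ^ 2 + ξ.2 ^ 2 + mu ^ 2) ^ (-s / 2 : ℝ) := by
    apply Continuous.mul (by continuity)
    apply Continuous.rpow_const (by continuity)
    intro p; left; positivity
  -- Step 1: Fubini + pulling out the exponential factor
  have step1 : (∫⁻ ξ : ℝ × ℝ, ENNReal.ofReal (Real.exp (-lam * ξ.1) *
          (lam⁻¹ ^ 2 * (1 - Real.exp (-lam * ξ.1)) ^ 2 + ξ.2 ^ 2 + mu ^ 2) ^ (-s / 2 : ℝ)))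
      = ∫⁻ t : ℝ, ENNReal.ofReal (Real.exp (-lam * t))
          * G (lam⁻¹ * (1 - Real.exp (-lam * t))) := by
    rw [Measure.volume_eq_prod, lintegral_prod _
      hIc.measurable.ennreal_ofReal.aemeasurable]
    refine lintegral_congr fun t => ?_
    simp_rw [ENNReal.ofReal_mul (Real.exp_nonneg _)]
    rw [lintegral_const_mul' _ _ ENNReal.ofReal_ne_top, hG]
    congr 1
    refine lintegral_congr fun v => ?_
    congr 2
    rw [mul_pow]
  -- Step 2: change of variables u = φ(t)
  have step2 : (∫⁻ t : ℝ, ENNReal.ofReal (Real.exp (-lam * t))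
          * G (lam⁻¹ * (1 - Real.exp (-lam * t))))
      = ∫⁻ u in Set.Iio lam⁻¹, G u := by
    have hcov := my_lintegral_cov MeasurableSet.univ
      (fun t _ => ((my_phi_hasDerivAt hlam t).hasDerivWithinAt :
        HasDerivWithinAt (fun t : ℝ => lam⁻¹ * (1 - Real.exp (-lam * t)))
          (Real.exp (-lam * t)) Set.univ t))
      (my_phi_injOn hlam) G
    rw [my_phi_image hlam, Measure.restrict_univ] at hcov
    simp only [Real.abs_exp] at hcov
    exact hcov.symm
  -- Step 3: split the domain
  have hsplit : (∫⁻ u in Set.Iio lam⁻¹, G u)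
      = (∫⁻ u in Set.Iio (0 : ℝ), G u) + ∫⁻ u in Set.Ico (0 : ℝ) lam⁻¹, G u := by
    rw [← Set.Iio_union_Ico_eq_Iio (le_of_lt (inv_pos.2 hlam)),
      lintegral_union measurableSet_Ico
        ((Set.Iio_disjoint_Ici le_rfl).mono_right Set.Ico_subset_Ici_self)]
  -- symmetry
  have hsym : (∫⁻ u in Set.Iio (0 : ℝ), G u) = ∫⁻ u in Set.Ioi (0 : ℝ), G u := by
    have hmp := Measure.measurePreserving_neg (volume : Measure ℝ)
    have hemb : MeasurableEmbedding (Neg.neg : ℝ → ℝ) :=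
      (Homeomorph.neg ℝ).measurableEmbedding
    have h := hmp.setLIntegral_comp_preimage_emb hemb G (Set.Iio 0)
    have hpre : (Neg.neg : ℝ → ℝ) ⁻¹' Set.Iio 0 = Set.Ioi 0 := by
      ext x; simp
    rw [hpre] at h
    rw [← h]
    exact lintegral_congr fun x => by rw [hG]; simp only [neg_sq]
  have hIciIoi : (∫⁻ u in Set.Ici (0 : ℝ), G u) = ∫⁻ u in Set.Ioi (0 : ℝ), G u :=
    (setLIntegral_congr Ioi_ae_eq_Ici).symm
  -- full-line integral via polar coordinates
  have hfull : (∫⁻ u : ℝ, G u)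
      = ENNReal.ofReal (2 * π) * ENNReal.ofReal (mu ^ (2 - s : ℝ) / (s - 2)) := by
    have hTon : (∫⁻ u : ℝ, G u)
        = ∫⁻ p : ℝ × ℝ, ENNReal.ofReal ((p.1 ^ 2 + p.2 ^ 2 + mu ^ 2) ^ (-s / 2 : ℝ)) := by
      rw [Measure.volume_eq_prod, lintegral_prod _
        hFc.measurable.ennreal_ofReal.aemeasurable]
    rw [hTon, ← my_lintegral_polar]
    have hpt : ∀ p : ℝ × ℝ, ENNReal.ofReal p.1 * ENNReal.ofReal
          (((polarCoord.symm p).1 ^ 2 + (polarCoord.symm p).2 ^ 2 + mu ^ 2) ^ (-s / 2 : ℝ))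
        = ENNReal.ofReal p.1 * ENNReal.ofReal ((p.1 ^ 2 + mu ^ 2) ^ (-s / 2 : ℝ)) := by
      intro p
      have hsymm : polarCoord.symm p = (p.1 * Real.cos p.2, p.1 * Real.sin p.2) := rfl
      rw [hsymm]
      congr 3
      simp only
      linear_combination p.1 ^ 2 * Real.sin_sq_add_cos_sq p.2
    rw [lintegral_congr fun p => hpt p]
    have htar : polarCoord.target = Set.Ioi (0 : ℝ) ×ˢ Set.Ioo (-π) π := rfl
    have hm : Measurable fun a : ℝ × ℝ =>
        ENNReal.ofReal a.1 * ENNReal.ofReal ((a.1 ^ 2 + mu ^ 2) ^ (-s / 2 : ℝ)) := by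
      exact measurable_fst.ennreal_ofReal.mul
        ((hrc.measurable.comp measurable_fst).ennreal_ofReal)
    rw [htar, Measure.volume_eq_prod, ← Measure.prod_restrict, lintegral_prod _ hm.aemeasurable]
    simp only [lintegral_const, Measure.restrict_apply MeasurableSet.univ, Set.univ_inter,
      Real.volume_Ioo, sub_neg_eq_add]
    rw [lintegral_mul_const' _ _ ENNReal.ofReal_ne_top]
    have hrad : (∫⁻ r in Set.Ioi (0 : ℝ), ENNReal.ofReal r
          * ENNReal.ofReal ((r ^ 2 + mu ^ 2) ^ (-s / 2 : ℝ)))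
        = ENNReal.ofReal (mu ^ (2 - s : ℝ) / (s - 2)) := by
      have hcongr : (∫⁻ r in Set.Ioi (0 : ℝ), ENNReal.ofReal r
            * ENNReal.ofReal ((r ^ 2 + mu ^ 2) ^ (-s / 2 : ℝ)))
          = ∫⁻ r in Set.Ioi (0 : ℝ),
              ENNReal.ofReal (r * (r ^ 2 + mu ^ 2) ^ (-s / 2 : ℝ)) := by
        refine setLIntegral_congr_fun measurableSet_Ioi ?_
        intro r hr
        dsimp only
        rw [ENNReal.ofReal_mul (le_of_lt hr)]
      rw [hcongr, ← ofReal_integral_eq_lintegral_ofReal (my_radial hmu hs).1 ?_, (my_radial hmu hs).2]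
      · rw [Filter.EventuallyLE, ae_restrict_iff' measurableSet_Ioi]
        filter_upwards with r
        intro hr
        have hr0 : (0 : ℝ) ≤ r := le_of_lt hr
        simp only [Pi.zero_apply]
        positivity
    rw [hrad, ← ENNReal.ofReal_mul
        (div_nonneg (Real.rpow_nonneg hmu.le _) (by linarith) :
          (0:ℝ) ≤ mu ^ (2 - s : ℝ) / (s - 2)),
      ← ENNReal.ofReal_mul (by positivity : (0:ℝ) ≤ 2 * π)]
    congr 1
    ring
  -- value of the main term
  have hM : (∫⁻ u in Set.Iio (0 : ℝ), G u)
      = ENNReal.ofReal (π * (mu ^ (2 - s : ℝ) / (s - 2))) := by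
    have h1 := lintegral_add_compl (μ := (volume : Measure ℝ)) G (measurableSet_Iio (a := (0 : ℝ)))
    rw [Set.compl_Iio, hIciIoi, ← hsym, hfull] at h1
    have h2 : (2 : ENNReal) * (∫⁻ u in Set.Iio (0 : ℝ), G u)
        = (2 : ENNReal) * ENNReal.ofReal (π * (mu ^ (2 - s : ℝ) / (s - 2))) := by
      rw [two_mul, h1]
      rw [show (2 * π : ℝ) = 2 * π from rfl, ENNReal.ofReal_mul (by norm_num : (0:ℝ) ≤ 2),
        ENNReal.ofReal_mul Real.pi_pos.le, ENNReal.ofReal_ofNat, mul_assoc]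
    exact (ENNReal.mul_right_inj (two_ne_zero) (ENNReal.ofNat_ne_top)).1 h2
  -- remainder bound
  have hmuexp : (0 : ℝ) ≤ mu ^ (2 - s : ℝ) := Real.rpow_nonneg hmu.le _
  have hC : ∀ u : ℝ, G u ≤ ENNReal.ofReal (mu ^ (2 - s : ℝ) * (π / mu)) := by
    intro u
    have hpoint : ∀ v : ℝ, (u ^ 2 + v ^ 2 + mu ^ 2) ^ (-s / 2 : ℝ)
        ≤ mu ^ (2 - s : ℝ) * (v ^ 2 + mu ^ 2)⁻¹ := by
      intro v
      have hb1 : (0 : ℝ) < v ^ 2 + mu ^ 2 := by positivity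
      have hb2 : v ^ 2 + mu ^ 2 ≤ u ^ 2 + v ^ 2 + mu ^ 2 := by nlinarith [sq_nonneg u]
      have h1 : (u ^ 2 + v ^ 2 + mu ^ 2) ^ (-s / 2 : ℝ) ≤ (v ^ 2 + mu ^ 2) ^ (-s / 2 : ℝ) :=
        Real.rpow_le_rpow_of_nonpos hb1 hb2 (by linarith)
      have h2 : (v ^ 2 + mu ^ 2) ^ (-s / 2 : ℝ)
          = (v ^ 2 + mu ^ 2) ^ (-((s - 2) / 2) : ℝ) * (v ^ 2 + mu ^ 2) ^ (-1 : ℝ) := by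
        rw [← Real.rpow_add hb1]; congr 1; ring
      have h3 : (v ^ 2 + mu ^ 2) ^ (-((s - 2) / 2) : ℝ) ≤ (mu ^ 2 : ℝ) ^ (-((s - 2) / 2) : ℝ) :=
        Real.rpow_le_rpow_of_nonpos (by positivity) (by nlinarith [sq_nonneg v]) (by linarith)
      have h4 : (mu ^ 2 : ℝ) ^ (-((s - 2) / 2) : ℝ) = mu ^ (2 - s : ℝ) := by
        rw [← Real.rpow_natCast mu 2, ← Real.rpow_mul hmu.le]
        congr 1
        push_cast
        ring
      have h5 : (v ^ 2 + mu ^ 2) ^ (-1 : ℝ) = (v ^ 2 + mu ^ 2)⁻¹ := by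
        rw [Real.rpow_neg_one]
      calc (u ^ 2 + v ^ 2 + mu ^ 2) ^ (-s / 2 : ℝ) ≤ (v ^ 2 + mu ^ 2) ^ (-s / 2 : ℝ) := h1
        _ = (v ^ 2 + mu ^ 2) ^ (-((s - 2) / 2) : ℝ) * (v ^ 2 + mu ^ 2)⁻¹ := by rw [h2, h5]
        _ ≤ mu ^ (2 - s : ℝ) * (v ^ 2 + mu ^ 2)⁻¹ := by
            rw [← h4]
            exact mul_le_mul_of_nonneg_right h3 (by positivity)
    have hint : Integrable (fun v : ℝ => mu ^ (2 - s : ℝ) * (v ^ 2 + mu ^ 2)⁻¹) :=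
      (my_lorentz hmu).1.const_mul _
    calc G u ≤ ∫⁻ v : ℝ, ENNReal.ofReal (mu ^ (2 - s : ℝ) * (v ^ 2 + mu ^ 2)⁻¹) :=
          lintegral_mono fun v => ENNReal.ofReal_le_ofReal (hpoint v)
      _ = ENNReal.ofReal (∫ v : ℝ, mu ^ (2 - s : ℝ) * (v ^ 2 + mu ^ 2)⁻¹) :=
          (ofReal_integral_eq_lintegral_ofReal hint
            (Filter.Eventually.of_forall fun v => by positivity)).symm
      _ = ENNReal.ofReal (mu ^ (2 - s : ℝ) * (π / mu)) := by
          rw [integral_const_mul, (my_lorentz hmu).2]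
  have hRle : (∫⁻ u in Set.Ico (0 : ℝ) lam⁻¹, G u)
      ≤ ENNReal.ofReal (lam⁻¹ * (mu ^ (2 - s : ℝ) * (π / mu))) := by
    calc (∫⁻ u in Set.Ico (0 : ℝ) lam⁻¹, G u)
        ≤ ∫⁻ _ in Set.Ico (0 : ℝ) lam⁻¹, ENNReal.ofReal (mu ^ (2 - s : ℝ) * (π / mu)) :=
          lintegral_mono fun u => hC u
      _ = ENNReal.ofReal (mu ^ (2 - s : ℝ) * (π / mu)) * volume (Set.Ico (0 : ℝ) lam⁻¹) :=
          setLIntegral_const _ _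
      _ = ENNReal.ofReal (lam⁻¹ * (mu ^ (2 - s : ℝ) * (π / mu))) := by
          rw [Real.volume_Ico, sub_zero, ← ENNReal.ofReal_mul (by positivity), mul_comm]
  exact ⟨_, by rw [step1, step2, hsplit, hM], hRle⟩


/-- c(s) = (2π)⁻² ∫ e^{-λξ₀} (λ⁻²(1-e^{-λξ₀})² + ξ₁² + μ²)^{-s/2} d²ξ, the
weighted trace density of Δ_ω(𝒟²+μ²)^{-s/2}. -/
noncomputable def cFun (lam mu s : ℝ) : ℝ :=
  (2 * Real.pi) ^ (-2 : ℤ) * ∫ ξ : ℝ × ℝ,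
    Real.exp (-lam * ξ.1) *
      (lam⁻¹ ^ 2 * (1 - Real.exp (-lam * ξ.1)) ^ 2 + ξ.2 ^ 2 + mu ^ 2) ^ (-s / 2 : ℝ)

/-- c(s) is finite for s > 2, and lim_{s→2⁺} (s-2) c(s) = 1/(4π),
independently of μ and λ. -/
theorem stmt19 (lam mu : ℝ) (hlam : 0 < lam) (hmu : 0 < mu) :
    (∀ s : ℝ, 2 < s →
      Integrable (fun ξ : ℝ × ℝ =>
        Real.exp (-lam * ξ.1) *
          (lam⁻¹ ^ 2 * (1 - Real.exp (-lam * ξ.1)) ^ 2 + ξ.2 ^ 2 + mu ^ 2) ^ (-s / 2 : ℝ))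
        (volume : Measure (ℝ × ℝ))) ∧
    Filter.Tendsto (fun s : ℝ => (s - 2) * cFun lam mu s)
      (nhdsWithin 2 (Set.Ioi 2)) (nhds (1 / (4 * Real.pi))) := by

  have hIc : ∀ s : ℝ, Continuous fun ξ : ℝ × ℝ => Real.exp (-lam * ξ.1) *
      (lam⁻¹ ^ 2 * (1 - Real.exp (-lam * ξ.1)) ^ 2 + ξ.2 ^ 2 + mu ^ 2) ^ (-s / 2 : ℝ) := by
    intro s
    apply Continuous.mul (by continuity)
    apply Continuous.rpow_const (by continuity)
    intro p; left; positivity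
  have hnn : ∀ s : ℝ, ∀ ξ : ℝ × ℝ, 0 ≤ Real.exp (-lam * ξ.1) *
      (lam⁻¹ ^ 2 * (1 - Real.exp (-lam * ξ.1)) ^ 2 + ξ.2 ^ 2 + mu ^ 2) ^ (-s / 2 : ℝ) := by
    intro s ξ
    positivity
  have hint : ∀ s : ℝ, 2 < s →
      Integrable (fun ξ : ℝ × ℝ =>
        Real.exp (-lam * ξ.1) *
          (lam⁻¹ ^ 2 * (1 - Real.exp (-lam * ξ.1)) ^ 2 + ξ.2 ^ 2 + mu ^ 2) ^ (-s / 2 : ℝ))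
        (volume : Measure (ℝ × ℝ)) := by
    intro s hs
    obtain ⟨R, hfeq, hRle⟩ := my_main hlam hmu hs
    refine ⟨(hIc s).aestronglyMeasurable, ?_⟩
    rw [hasFiniteIntegral_iff_ofReal (Filter.Eventually.of_forall (hnn s))]
    rw [hfeq]
    exact ENNReal.add_lt_top.2 ⟨ENNReal.ofReal_lt_top,
      lt_of_le_of_lt hRle ENNReal.ofReal_lt_top⟩
  refine ⟨hint, ?_⟩
  -- decomposition of (s-2) * cFun
  have hdecomp : ∀ s : ℝ, 2 < s → ∃ r : ℝ,
      0 ≤ r ∧ r ≤ lam⁻¹ * (mu ^ (2 - s : ℝ) * (π / mu)) ∧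
      (s - 2) * cFun lam mu s
        = (2 * π) ^ (-2 : ℤ) * (π * mu ^ (2 - s : ℝ)) + (s - 2) * ((2 * π) ^ (-2 : ℤ) * r) := by
    intro s hs
    obtain ⟨R, hfeq, hRle⟩ := my_main hlam hmu hs
    have hRtop : R ≠ ⊤ := (lt_of_le_of_lt hRle ENNReal.ofReal_lt_top).ne
    have hbound_nn : (0:ℝ) ≤ lam⁻¹ * (mu ^ (2 - s : ℝ) * (π / mu)) := by positivity
    refine ⟨R.toReal, ENNReal.toReal_nonneg, ENNReal.toReal_le_of_le_ofReal hbound_nn hRle, ?_⟩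
    have hM_nn : (0:ℝ) ≤ π * (mu ^ (2 - s : ℝ) / (s - 2)) := by
      have := Real.rpow_nonneg hmu.le (2 - s)
      have h2 : (0:ℝ) < s - 2 := by linarith
      positivity
    have hc : cFun lam mu s
        = (2 * π) ^ (-2 : ℤ) * (π * (mu ^ (2 - s : ℝ) / (s - 2)) + R.toReal) := by
      unfold cFun
      congr 1
      rw [integral_eq_lintegral_of_nonneg_ae (Filter.Eventually.of_forall (hnn s))
        (hIc s).aestronglyMeasurable, hfeq, ENNReal.toReal_add ENNReal.ofReal_ne_top hRtop,
        ENNReal.toReal_ofReal hM_nn]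
    rw [hc]
    have hsne : s - 2 ≠ 0 := by linarith
    field_simp
  have hμcont : Filter.Tendsto (fun s : ℝ => mu ^ (2 - s : ℝ))
      (nhdsWithin 2 (Set.Ioi 2)) (nhds 1) := by
    have heq : (fun s : ℝ => mu ^ (2 - s : ℝ)) = fun s => Real.exp ((2 - s) * Real.log mu) := by
      funext s
      rw [Real.rpow_def_of_pos hmu, mul_comm]
    rw [heq]
    have hc : Continuous fun s : ℝ => Real.exp ((2 - s) * Real.log mu) := by continuity
    have h2 := (hc.tendsto 2).mono_left
      (nhdsWithin_le_nhds (s := Set.Ioi (2:ℝ)))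
    simpa using h2
  have hval : ((2 * π : ℝ)) ^ (-2 : ℤ) * π = 1 / (4 * π) := by
    have hπ : (π : ℝ) ≠ 0 := Real.pi_ne_zero
    rw [zpow_neg, show ((2 * π : ℝ)) ^ (2:ℤ) = 4 * π ^ 2 by push_cast [zpow_two]; ring]
    field_simp
  -- limits of lower and upper bounds
  have hlow : Filter.Tendsto (fun s : ℝ => (2 * π) ^ (-2 : ℤ) * (π * mu ^ (2 - s : ℝ)))
      (nhdsWithin 2 (Set.Ioi 2)) (nhds (1 / (4 * π))) := by
    have h := (hμcont.const_mul π).const_mul ((2 * π : ℝ) ^ (-2 : ℤ))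
    have e : (2 * π : ℝ) ^ (-2 : ℤ) * (π * 1) = 1 / (4 * π) := by
      rw [mul_one]; exact hval
    exact e ▸ h
  have hsub : Filter.Tendsto (fun s : ℝ => s - 2) (nhdsWithin 2 (Set.Ioi 2)) (nhds 0) := by
    have : Filter.Tendsto (fun s : ℝ => s - 2) (nhds 2) (nhds (2 - 2)) :=
      (continuous_id.sub continuous_const).tendsto 2
    simpa using this.mono_left nhdsWithin_le_nhds
  have hupp : Filter.Tendsto (fun s : ℝ =>
        (2 * π) ^ (-2 : ℤ) * (π * mu ^ (2 - s : ℝ))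
          + (s - 2) * ((2 * π) ^ (-2 : ℤ) * (lam⁻¹ * (mu ^ (2 - s : ℝ) * (π / mu)))))
      (nhdsWithin 2 (Set.Ioi 2)) (nhds (1 / (4 * π))) := by
    have h2 : Filter.Tendsto (fun s : ℝ =>
          (s - 2) * ((2 * π) ^ (-2 : ℤ) * (lam⁻¹ * (mu ^ (2 - s : ℝ) * (π / mu)))))
        (nhdsWithin 2 (Set.Ioi 2)) (nhds 0) := by
      have hK : Filter.Tendsto
          (fun s : ℝ => (2 * π) ^ (-2 : ℤ) * (lam⁻¹ * (mu ^ (2 - s : ℝ) * (π / mu))))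
          (nhdsWithin 2 (Set.Ioi 2))
          (nhds ((2 * π) ^ (-2 : ℤ) * (lam⁻¹ * (1 * (π / mu))))) := by
        exact (((hμcont.mul_const (π / mu)).const_mul lam⁻¹).const_mul _)
      simpa using hsub.mul hK
    simpa using hlow.add h2
  -- squeeze
  refine tendsto_of_tendsto_of_tendsto_of_le_of_le' hlow hupp ?_ ?_
  · filter_upwards [self_mem_nhdsWithin] with s hs
    obtain ⟨r, hr0, hrle, heq⟩ := hdecomp s hs
    rw [heq]
    have hs2 : (0:ℝ) < s - 2 := sub_pos.2 hs
    have h1 : (0:ℝ) ≤ (s - 2) * ((2 * π) ^ (-2 : ℤ) * r) := by positivity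
    linarith
  · filter_upwards [self_mem_nhdsWithin] with s hs
    obtain ⟨r, hr0, hrle, heq⟩ := hdecomp s hs
    rw [heq]
    have hs2 : (0:ℝ) ≤ s - 2 := by have := Set.mem_Ioi.1 hs; linarith
    have hA : (0:ℝ) ≤ (2 * π : ℝ) ^ (-2 : ℤ) := by positivity
    have h2 := mul_le_mul_of_nonneg_left
      (mul_le_mul_of_nonneg_left hrle hA) hs2
    linarith
end
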